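/- Let f : ℝ/ℤ → ℝ be continuous, ω irrational, and p_n/q_n → ω rationals. Suppose for each n, S(p_n/q_n) = ∪_θ σ(h_{p_n/q_n,θ}) is a union of at most q_n closed intervals, and suppose there are constants C > 0, β > 1/2 such that every E ∈ Σ ⊆ S(ω) lies within distance C|ω − p_n/q_n|^β of S(p_n/q_n) for all large n, where additionally |ω − p_n/q_n| < 1/q_n². Then the Lebesgue measure of Σ \ S(p_n/q_n) tends to 0 as n → ∞. -/

import Mathlib

open MeasureTheory Filter

/-- `h` is the Schrödinger operator on `ℓ²(ℤ)` with potential `n ↦ f(θ + nω)`. -/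
def IsSchrodingerOp (f : ℝ → ℝ) (ω θ : ℝ)
    (h : lp (fun _ : ℤ => ℝ) 2 →L[ℝ] lp (fun _ : ℤ => ℝ) 2) : Prop :=
  ∀ (ψ : lp (fun _ : ℤ => ℝ) 2) (n : ℤ),
    h ψ n = ψ (n + 1) + ψ (n - 1) + f (θ + n * ω) * ψ n

/-- `S(ω) = ⋃_θ σ(h_{ω,θ})`. -/
def unionSpectrum (f : ℝ → ℝ) (ω : ℝ) : Set ℝ :=
  {E | ∃ (θ : ℝ) (h : lp (fun _ : ℤ => ℝ) 2 →L[ℝ] lp (fun _ : ℤ => ℝ) 2),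
    IsSchrodingerOp f ω θ h ∧ E ∈ spectrum ℝ h}

/-- If each `S(p_n/q_n)` is a union of at most `q_n` closed intervals, every `E` in a
measurable set `Σ ⊆ S(ω)` lies within `C|ω − p_n/q_n|^β` of `S(p_n/q_n)` for all large `n`
with `β > 1/2`, and `|ω − p_n/q_n| < 1/q_n²`, then `|Σ \ S(p_n/q_n)| → 0`. -/
theorem measure_spectrum_difference_tendsto_zero
    (f : ℝ → ℝ) (hf : Continuous f) (hper : Function.Periodic f 1)
    (ω : ℝ) (hω : Irrational ω)
    (p : ℕ → ℤ) (q : ℕ → ℕ) (hq : ∀ n, 0 < q n)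
    (hconv : Tendsto (fun n => (p n : ℝ) / (q n : ℝ)) atTop (nhds ω))
    (hclose : ∀ n, |ω - (p n : ℝ) / (q n : ℝ)| < 1 / (q n : ℝ) ^ 2)
    (Sig : Set ℝ) (hmeas : MeasurableSet Sig) (hsub : Sig ⊆ unionSpectrum f ω)
    (hintervals : ∀ n, ∃ a b : Fin (q n) → ℝ,
      unionSpectrum f ((p n : ℝ) / (q n : ℝ)) = ⋃ i, Set.Icc (a i) (b i))
    (C β : ℝ) (hC : 0 < C) (hβ : 1 / 2 < β)
    (happrox : ∀ᶠ n in atTop, ∀ E ∈ Sig,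
      ∃ E' ∈ unionSpectrum f ((p n : ℝ) / (q n : ℝ)),
        |E - E'| ≤ C * |ω - (p n : ℝ) / (q n : ℝ)| ^ β) :
    Tendsto (fun n => volume (Sig \ unionSpectrum f ((p n : ℝ) / (q n : ℝ))))
      atTop (nhds 0) := by
  set r : ℕ → ℝ := fun n => (p n : ℝ) / (q n : ℝ) with hr
  have hd0 : Tendsto (fun n => |ω - r n|) atTop (nhds 0) := by
    have : Tendsto (fun n => ω - r n) atTop (nhds (ω - ω)) :=
      tendsto_const_nhds.sub hconv
    rw [sub_self] at this
    simpa using this.abs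
  have hdne : ∀ n, ω - r n ≠ 0 := by
    intro n h
    have : ω = ((((p n : ℚ) / (q n : ℚ)) : ℚ) : ℝ) := by
      push_cast
      linarith [sub_eq_zero.1 h]
    exact hω ⟨_, this.symm⟩
  -- eventual bound
  have key : ∀ᶠ n in atTop,
      volume (Sig \ unionSpectrum f (r n))
        ≤ ENNReal.ofReal (2 * C * |ω - r n| ^ (β - 1/2)) := by
    filter_upwards [happrox] with n hn
    obtain ⟨a, b, hab⟩ := hintervals n
    set ε := C * |ω - r n| ^ β with hε
    have hε0 : 0 ≤ ε := mul_nonneg hC.le (Real.rpow_nonneg (abs_nonneg _) _)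
    have hsub' : Sig \ unionSpectrum f (r n) ⊆
        ⋃ i, (Set.Icc (a i - ε) (b i + ε) \ Set.Icc (a i) (b i)) := by
      rintro E ⟨hE, hE'⟩
      obtain ⟨E', hE'S, hdist⟩ := hn E hE
      rw [hab] at hE'S hE'
      obtain ⟨i, hi⟩ := Set.mem_iUnion.1 hE'S
      have h1 := (abs_le.1 hdist).1
      have h2 := (abs_le.1 hdist).2
      refine Set.mem_iUnion.2 ⟨i, ⟨⟨?_, ?_⟩, fun h => hE' (Set.mem_iUnion.2 ⟨i, h⟩)⟩⟩
      · linarith [hi.1]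
      · linarith [hi.2]
    have hterm : ∀ i : Fin (q n),
        volume (Set.Icc (a i - ε) (b i + ε) \ Set.Icc (a i) (b i))
          ≤ ENNReal.ofReal (2 * ε) := by
      intro i
      by_cases hiab : a i ≤ b i
      · have hsubIcc : Set.Icc (a i) (b i) ⊆ Set.Icc (a i - ε) (b i + ε) :=
          Set.Icc_subset_Icc (by linarith) (by linarith)
        rw [measure_diff hsubIcc measurableSet_Icc.nullMeasurableSet
            (by simp [Real.volume_Icc])]
        rw [Real.volume_Icc, Real.volume_Icc, ← ENNReal.ofReal_sub _ (by linarith)]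
        exact ENNReal.ofReal_le_ofReal (by linarith)
      · refine le_trans (measure_mono Set.diff_subset) ?_
        rw [Real.volume_Icc]
        exact ENNReal.ofReal_le_ofReal (by push_neg at hiab; linarith)
    calc volume (Sig \ unionSpectrum f (r n))
        ≤ ∑ i, volume (Set.Icc (a i - ε) (b i + ε) \ Set.Icc (a i) (b i)) :=
          le_trans (measure_mono hsub') (measure_iUnion_fintype_le _ _)
      _ ≤ ∑ _i : Fin (q n), ENNReal.ofReal (2 * ε) := Finset.sum_le_sum fun i _ => hterm i
      _ = (q n : ℕ) • ENNReal.ofReal (2 * ε) := by simp [Finset.sum_const]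
      _ ≤ ENNReal.ofReal (2 * C * |ω - r n| ^ (β - 1/2)) := by
          rw [nsmul_eq_mul, ← ENNReal.ofReal_natCast, ← ENNReal.ofReal_mul (by positivity)]
          refine ENNReal.ofReal_le_ofReal ?_
          have habs : 0 < |ω - r n| := abs_pos.2 (hdne n)
          have hq' : (0:ℝ) < (q n : ℝ) := by exact_mod_cast hq n
          have hsplit : |ω - r n| ^ β
              = |ω - r n| ^ ((1:ℝ)/2) * |ω - r n| ^ (β - 1/2) := by
            rw [← Real.rpow_add habs]; ring_nf
          have hhalf : |ω - r n| ^ ((1:ℝ)/2) ≤ 1 / (q n : ℝ) := by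
            have h1 : |ω - r n| ^ ((1:ℝ)/2) ≤ (1 / (q n : ℝ) ^ 2) ^ ((1:ℝ)/2) :=
              Real.rpow_le_rpow (abs_nonneg _) (hclose n).le (by norm_num)
            have h2 : ((1:ℝ) / (q n : ℝ) ^ 2) ^ ((1:ℝ)/2) = 1 / (q n : ℝ) := by
              rw [← Real.sqrt_eq_rpow,
                show (1:ℝ)/(q n : ℝ)^2 = ((1:ℝ)/(q n : ℝ))^2 by ring]
              exact Real.sqrt_sq (by positivity)
            linarith
          have hrp : 0 ≤ |ω - r n| ^ (β - 1/2) := Real.rpow_nonneg (abs_nonneg _) _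
          calc (q n : ℝ) * (2 * ε)
              = 2 * C * ((q n : ℝ) * (|ω - r n| ^ ((1:ℝ)/2) * |ω - r n| ^ (β - 1/2))) := by
                rw [hε, hsplit]; ring
            _ ≤ 2 * C * ((q n : ℝ) * (1 / (q n : ℝ) * |ω - r n| ^ (β - 1/2))) := by
                have h3 := mul_le_mul_of_nonneg_left
                  (mul_le_mul_of_nonneg_right hhalf hrp) hq'.le
                have h4 := mul_le_mul_of_nonneg_left h3
                  (by positivity : (0:ℝ) ≤ 2 * C)
                linarith [h4]
            _ = 2 * C * |ω - r n| ^ (β - 1/2) := by field_simp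
  -- limit of the bound
  have hlim : Tendsto (fun n => ENNReal.ofReal (2 * C * |ω - r n| ^ (β - 1/2)))
      atTop (nhds 0) := by
    have h1 : Tendsto (fun n => |ω - r n| ^ (β - 1/2)) atTop (nhds 0) := by
      have hc : ContinuousAt (fun x : ℝ => x ^ (β - 1/2)) 0 :=
        Real.continuousAt_rpow_const 0 _ (Or.inr (by linarith))
      have := hc.tendsto.comp hd0
      rwa [Real.zero_rpow (by linarith : β - 1/2 ≠ 0)] at this
    have h2 : Tendsto (fun n => 2 * C * |ω - r n| ^ (β - 1/2)) atTop (nhds 0) := by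
      have := h1.const_mul (2 * C)
      simpa using this
    have := (ENNReal.continuous_ofReal.tendsto 0).comp h2
    simpa [Function.comp_def] using this
  refine tendsto_of_tendsto_of_tendsto_of_le_of_le' tendsto_const_nhds hlim
    (Eventually.of_forall fun n => zero_le) key
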